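/- Let t ≠ s, let k ≥ 0, and suppose S ⊆ E induces k edge-disjoint simple paths from s to t of minimum total cost in G (with S = ∅ if k = 0). Then every path in the residual network G_S that ends at t has nonnegative cost with respect to c_S. -/

import Mathlib

open scoped Classical

namespace MultipathPreserver

variable {V : Type*}

/-- `IsPath F u v L`: `L` is a list of pairwise-distinct directed edges
`e_1, …, e_k` with `e_j = (x_{j-1}, x_j)`, `x_0 = u`, `x_k = v`, all edges
belonging to the edge set `F`. The empty list is a path from `u` to `u`. -/
def IsPath (F : Set (V × V)) (u v : V) (L : List (V × V)) : Prop :=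
  L.Nodup ∧ (∀ e ∈ L, e ∈ F) ∧ List.Chain' (fun e f => e.2 = f.1) L ∧
  (∀ e ∈ L.head?, e.1 = u) ∧ (∀ e ∈ L.getLast?, e.2 = v) ∧ (L = [] → u = v)

/-- The cost of a path (sum of edge costs w.r.t. the cost function `w`). -/
def pathCost (w : V × V → ℝ) (L : List (V × V)) : ℝ := (L.map w).sum

/-- A family of `k` pairwise edge-disjoint paths from `u` to `v` in the graph
with edge set `F`. -/
def IsDisjointFamily (F : Set (V × V)) (u v : V) {k : ℕ}
    (P : Fin k → List (V × V)) : Prop :=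
  (∀ j, IsPath F u v (P j)) ∧ ∀ j j' : Fin k, j ≠ j' → ∀ e ∈ P j, e ∉ P j'

/-- The total cost of a family of paths. -/
def famCost (w : V × V → ℝ) {k : ℕ} (P : Fin k → List (V × V)) : ℝ :=
  ∑ j, pathCost w (P j)

/-- A family of `k` pairwise edge-disjoint paths from `u` to `v` whose total
cost is minimum among all such families. -/
def IsMinFamily (F : Set (V × V)) (w : V × V → ℝ) (u v : V) {k : ℕ}
    (P : Fin k → List (V × V)) : Prop :=
  IsDisjointFamily F u v P ∧
  ∀ Q : Fin k → List (V × V), IsDisjointFamily F u v Q → famCost w P ≤ famCost w Q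

/-- `S` induces `k` edge-disjoint paths of minimum total cost from `u` to `v`
in the graph with edge set `F` and costs `w`: `S` is exactly the set of edges
used by some minimum-total-cost family of `k` pairwise edge-disjoint paths. -/
def Induces (F : Set (V × V)) (w : V × V → ℝ) (u v : V) (k : ℕ)
    (S : Set (V × V)) : Prop :=
  ∃ P : Fin k → List (V × V), IsMinFamily F w u v P ∧ S = {e | ∃ j, e ∈ P j}

/-- As `Induces`, but additionally the paths of the family are simple
(their vertices `u, (P j)_1.2, …` are pairwise distinct). -/
def InducesSimple (F : Set (V × V)) (w : V × V → ℝ) (u v : V) (k : ℕ)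
    (S : Set (V × V)) : Prop :=
  ∃ P : Fin k → List (V × V), IsMinFamily F w u v P ∧
    (∀ j, (u :: (P j).map Prod.snd).Nodup) ∧ S = {e | ∃ j, e ∈ P j}

/-- Edge set of the residual network `G_S`: edges of `E \ S` together with the
reversals of the edges of `S`. -/
def resEdges (E S : Set (V × V)) : Set (V × V) :=
  (E \ S) ∪ {e | (e.2, e.1) ∈ S}

/-- Cost function of the residual network `G_S`: a reversed edge `(v,u)` with
`(u,v) ∈ S` costs `-c (u,v)`; any other edge keeps its cost. -/
noncomputable def resCost (c : V × V → ℝ) (S : Set (V × V)) (e : V × V) : ℝ :=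
  if (e.2, e.1) ∈ S then -c (e.2, e.1) else c e

/-- `η(L)`: the number of edges of `L` belonging to `E \ H`. -/
noncomputable def eta (E H : Set (V × V)) (L : List (V × V)) : ℕ :=
  L.countP (fun e => decide (e ∈ E ∧ e ∉ H))

/-- The measure `|π| = (c_S(π), η(π))` of a path, compared lexicographically. -/
noncomputable def pmeasure (w : V × V → ℝ) (E H : Set (V × V))
    (L : List (V × V)) : ℝ × ℕ :=
  (pathCost w L, eta E H L)

/-- Strict lexicographic order on measures. -/
def lexLt (a b : ℝ × ℕ) : Prop := a.1 < b.1 ∨ (a.1 = b.1 ∧ a.2 < b.2)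

/-- Lexicographic order on measures. -/
def lexLe (a b : ℝ × ℕ) : Prop := a.1 < b.1 ∨ (a.1 = b.1 ∧ a.2 ≤ b.2)

/-- `Π(u,v; G_S)`: the paths from `u` to `v` in the residual network `G_S`
that are minimal w.r.t. the lexicographic order `≼` on `|·| = (c_S(·), η(·))`. -/
def PiMin (E H : Set (V × V)) (c : V × V → ℝ) (S : Set (V × V)) (u v : V) :
    Set (List (V × V)) :=
  {L | IsPath (resEdges E S) u v L ∧
    ∀ L', IsPath (resEdges E S) u v L' →
      lexLe (pmeasure (resCost c S) E H L) (pmeasure (resCost c S) E H L')}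

/-- The number of edges of the prefix `π[s : q(π)]` of a path `π`:
one more than the index of the last edge of `π`, other than the final edge,
belonging to `E \ H`; `0` if no such edge exists. -/
noncomputable def qPrefixLen (E H : Set (V × V)) (L : List (V × V)) : ℕ :=
  L.dropLast.length -
    List.findIdx (fun e => decide (e ∈ E ∧ e ∉ H)) L.dropLast.reverse

/-- `q(π)`: the last internal vertex of `π` whose incoming edge along `π`
belongs to `E \ H`, and `s` if no such vertex exists.  The prefix `π[s:q(π)]`
is `L.take (qPrefixLen E H L)` and the suffix `π[q(π):t]` is
`L.drop (qPrefixLen E H L)`. -/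
noncomputable def qVert (E H : Set (V × V)) (s : V) (L : List (V × V)) : V :=
  ((L.take (qPrefixLen E H L)).getLast?).elim s Prod.snd

/-- `λ(t)`: the maximum number of pairwise edge-disjoint paths from `s` to `t`
in the graph with edge set `E`. -/
noncomputable def lambda (E : Set (V × V)) (s t : V) : ℕ :=
  sSup {k : ℕ | ∃ P : Fin k → List (V × V), IsDisjointFamily E s t P}

/-- Divergence contribution of an edge `e` at a vertex `v`. -/
noncomputable def dvg (v : V) (e : V × V) : ℤ :=
  (if e.1 = v then 1 else 0) - (if e.2 = v then 1 else 0)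

lemma dvg_swap (v : V) (e : V × V) : dvg v (e.2, e.1) = - dvg v e := by
  simp only [dvg]; ring

lemma chain_dvg (v : V) (L : List (V × V)) : ∀ (u t : V),
    List.Chain' (fun e f => e.2 = f.1) L →
    (∀ e ∈ L.head?, e.1 = u) → (∀ e ∈ L.getLast?, e.2 = t) → (L = [] → u = t) →
    (L.map (dvg v)).sum = (if u = v then (1:ℤ) else 0) - (if t = v then 1 else 0) := by
  induction L with
  | nil =>
    intro u t _ _ _ hnil
    simp [hnil rfl]
  | cons e L ih =>
    intro u t hch hh hl _
    have h1 : e.1 = u := hh e rfl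
    cases L with
    | nil =>
      have h2 : e.2 = t := hl e rfl
      simp [dvg, h1, h2]
    | cons f L' =>
      have h2 : e.2 = f.1 := (List.isChain_cons_cons.mp hch).1
      have ihs := ih e.2 t (List.isChain_cons_cons.mp hch).2
        (by intro g hg; simp only [List.head?_cons, Option.mem_def, Option.some.injEq] at hg
            rw [← hg]; exact h2.symm)
        (by intro g hg; apply hl; rw [List.getLast?_cons_cons]; exact hg)
        (by simp)
      simp only [List.map_cons, List.sum_cons] at ihs ⊢
      rw [ihs]
      simp only [dvg, h1]
      ring

/-- Trail extraction: from a vertex with positive divergence there is a trail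
to a vertex with negative divergence. -/
lemma exists_trail : ∀ (n : ℕ) (T : Finset (V × V)), T.card ≤ n → ∀ x : V,
    0 < (∑ e ∈ T, dvg x e) →
    ∃ (y : V) (L : List (V × V)), L ≠ [] ∧ L.Nodup ∧ (∀ e ∈ L, e ∈ T) ∧
      List.Chain' (fun e f => e.2 = f.1) L ∧ (∀ e ∈ L.head?, e.1 = x) ∧
      (∀ e ∈ L.getLast?, e.2 = y) ∧ (∑ e ∈ T, dvg y e) < 0 := by
  intro n
  induction n with
  | zero =>
    intro T hT x hx
    have : T = ∅ := Finset.card_eq_zero.mp (Nat.le_zero.mp hT)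
    subst this
    simp at hx
  | succ n ih =>
    intro T hT x hx
    classical
    have hex : ∃ e ∈ T, 0 < dvg x e := by
      by_contra h
      push_neg at h
      have hnp : (∑ e ∈ T, dvg x e) ≤ 0 := Finset.sum_nonpos h
      omega
    obtain ⟨e, heT, hde⟩ := hex
    have he1 : e.1 = x ∧ ¬ e.2 = x := by
      unfold dvg at hde
      constructor
      · by_contra hne; simp [hne] at hde; split_ifs at hde <;> omega
      · intro h2; simp [h2] at hde; split_ifs at hde <;> omega
    have hsub : ∀ w, (∑ f ∈ T.erase e, dvg w f) = (∑ f ∈ T, dvg w f) - dvg w e := by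
      intro w
      have := Finset.sum_erase_add T (dvg w) heT
      omega
    by_cases hneg : (∑ f ∈ T, dvg e.2 f) < 0
    · refine ⟨e.2, [e], by simp, List.nodup_singleton e, by simpa using heT,
        List.isChain_singleton e, ?_, ?_, hneg⟩
      · intro g hg
        simp only [List.head?_cons, Option.mem_def, Option.some.injEq] at hg
        rw [← hg]; exact he1.1
      · intro g hg
        simp only [List.getLast?_singleton, Option.mem_def, Option.some.injEq] at hg
        rw [← hg]
    · have hdvg2 : dvg e.2 e = -1 := by
        have h12 : e.1 ≠ e.2 := by rw [he1.1]; exact fun h => he1.2 h.symm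
        simp [dvg, h12]
      have hpos' : 0 < ∑ f ∈ T.erase e, dvg e.2 f := by
        rw [hsub, hdvg2]; omega
      have hcard : (T.erase e).card ≤ n := by
        have := Finset.card_erase_of_mem heT
        have := Finset.card_pos.mpr ⟨e, heT⟩
        omega
      obtain ⟨y, L', hne, hnd, hmem, hch, hhd, hlast, hyneg⟩ := ih (T.erase e) hcard e.2 hpos'
      have heL' : e ∉ L' := fun h => (Finset.notMem_erase e T) (hmem e h)
      have hyne2 : y ≠ e.2 := by
        intro h; rw [h] at hyneg; omega
      have hynex : y ≠ x := by
        intro h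
        rw [h, hsub] at hyneg
        have : dvg x e = 1 := by simp [dvg, he1.1, he1.2]
        have hx1 : 1 ≤ ∑ f ∈ T, dvg x f := hx
        omega
      refine ⟨y, e :: L', by simp, List.nodup_cons.mpr ⟨heL', hnd⟩, ?_, ?_, ?_, ?_, ?_⟩
      · intro g hg
        rcases List.mem_cons.mp hg with h | h
        · rw [h]; exact heT
        · exact Finset.mem_of_mem_erase (hmem g h)
      · refine List.isChain_cons.mpr ⟨?_, hch⟩
        intro f hf
        exact (hhd f hf).symm
      · intro g hg
        simp only [List.head?_cons, Option.mem_def, Option.some.injEq] at hg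
        rw [← hg]; exact he1.1
      · intro g hg
        cases L' with
        | nil => exact absurd rfl hne
        | cons f L'' =>
          rw [List.getLast?_cons_cons] at hg
          exact hlast g hg
      · have hde' : dvg y e = 0 := by
          have h1 : e.1 ≠ y := by rw [he1.1]; exact fun h => hynex h.symm
          have h2 : e.2 ≠ y := fun h => hyne2 h.symm
          simp [dvg, h1, h2]
        have := hsub y
        omega

/-- Family extraction: a nonnegatively-costed edge set whose only vertex of
negative divergence is `t` and whose divergence at `s` is at least `k`
contains `k` edge-disjoint trails from `s` to `t`. -/
lemma extract_family (E : Set (V × V)) (c : V × V → ℝ) (hc : ∀ e ∈ E, 0 ≤ c e)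
    (s t : V) :
    ∀ (k : ℕ) (T : Finset (V × V)), (∀ e ∈ T, e ∈ E) →
    (∀ v, (∑ e ∈ T, dvg v e) < 0 → v = t) → ((k : ℤ) ≤ ∑ e ∈ T, dvg s e) →
    ∃ Q : Fin k → List (V × V), IsDisjointFamily E s t Q ∧
      (∀ j, ∀ e ∈ Q j, e ∈ T) ∧ famCost c Q ≤ ∑ e ∈ T, c e := by
  intro k
  induction k with
  | zero =>
    intro T hTE _ _
    refine ⟨fun j => j.elim0, ⟨fun j => j.elim0, fun j => j.elim0⟩, fun j => j.elim0, ?_⟩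
    have : famCost c (fun j : Fin 0 => j.elim0) = 0 := by
      simp [famCost]
    rw [this]
    exact Finset.sum_nonneg fun e he => hc e (hTE e he)
  | succ k ih =>
    intro T hTE hneg hs
    classical
    have hspos : 0 < ∑ e ∈ T, dvg s e := by omega
    obtain ⟨y, L, hLne, hLnd, hLmem, hLch, hLhd, hLlast, hy⟩ :=
      exists_trail T.card T le_rfl s hspos
    have hyt : y = t := hneg y hy
    rw [hyt] at hLlast
    have hsubT : L.toFinset ⊆ T := fun e he => hLmem e (List.mem_toFinset.mp he)
    have hLsum : ∀ (v : V), (∑ e ∈ L.toFinset, dvg v e) =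
        (if s = v then 1 else 0) - (if t = v then 1 else 0) := by
      intro v
      rw [List.sum_toFinset _ hLnd]
      exact chain_dvg v L s t hLch hLhd hLlast (fun h => absurd h hLne)
    have hdiv' : ∀ v, (∑ e ∈ T \ L.toFinset, dvg v e) =
        (∑ e ∈ T, dvg v e) - ((if s = v then 1 else 0) - (if t = v then 1 else 0)) := by
      intro v
      rw [Finset.sum_sdiff_eq_sub hsubT, hLsum]
    have hT'E : ∀ e ∈ T \ L.toFinset, e ∈ E := fun e he => hTE e (Finset.mem_sdiff.mp he).1
    have hneg' : ∀ v, (∑ e ∈ T \ L.toFinset, dvg v e) < 0 → v = t := by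
      intro v hv
      by_contra hvt
      rw [hdiv' v, if_neg (fun h : t = v => hvt h.symm)] at hv
      by_cases hvs : s = v
      · rw [if_pos hvs, ← hvs] at hv
        omega
      · rw [if_neg hvs] at hv
        exact hvt (hneg v (by omega))
    have hs' : (k : ℤ) ≤ ∑ e ∈ T \ L.toFinset, dvg s e := by
      rw [hdiv' s, if_pos rfl]
      have : (if t = s then (1:ℤ) else 0) = 0 ∨ (if t = s then (1:ℤ) else 0) = 1 := by
        split_ifs <;> simp
      omega
    obtain ⟨Q', hQ'fam, hQ'mem, hQ'cost⟩ := ih (T \ L.toFinset) hT'E hneg' hs'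
    have hLQ : ∀ i : Fin k, ∀ e ∈ L, e ∉ Q' i := by
      intro i e heL heQ
      exact (Finset.mem_sdiff.mp (hQ'mem i e heQ)).2 (List.mem_toFinset.mpr heL)
    have hLpath : IsPath E s t L :=
      ⟨hLnd, fun e he => hTE e (hLmem e he), hLch, hLhd, hLlast, fun h => absurd h hLne⟩
    refine ⟨Fin.cons L Q', ⟨?_, ?_⟩, ?_, ?_⟩
    · intro j
      rcases Fin.eq_zero_or_eq_succ j with rfl | ⟨i, rfl⟩
      · simpa using hLpath
      · simpa using hQ'fam.1 i
    · intro j j' hne e hej hej'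
      rcases Fin.eq_zero_or_eq_succ j with rfl | ⟨i, rfl⟩ <;>
        rcases Fin.eq_zero_or_eq_succ j' with rfl | ⟨i', rfl⟩
      · exact hne rfl
      · rw [Fin.cons_zero] at hej
        rw [Fin.cons_succ] at hej'
        exact hLQ i' e hej hej'
      · rw [Fin.cons_succ] at hej
        rw [Fin.cons_zero] at hej'
        exact hLQ i e hej' hej
      · rw [Fin.cons_succ] at hej hej'
        exact hQ'fam.2 i i' (fun h => hne (by rw [h])) e hej hej'
    · intro j e he
      rcases Fin.eq_zero_or_eq_succ j with rfl | ⟨i, rfl⟩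
      · rw [Fin.cons_zero] at he
        exact hLmem e he
      · rw [Fin.cons_succ] at he
        exact (Finset.mem_sdiff.mp (hQ'mem i e he)).1
    · have hsplit : famCost c (Fin.cons L Q') = pathCost c L + famCost c Q' := by
        simp [famCost, Fin.sum_univ_succ]
      have hLcost : pathCost c L = ∑ e ∈ L.toFinset, c e := by
        rw [pathCost, List.sum_toFinset _ hLnd]
      have hdiffcost : (∑ e ∈ T \ L.toFinset, c e) = (∑ e ∈ T, c e) - ∑ e ∈ L.toFinset, c e :=
        Finset.sum_sdiff_eq_sub hsubT
      rw [hdiffcost] at hQ'cost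
      rw [hsplit, hLcost]
      linarith

/-- Lemma `positive`. If `S` induces `k` edge-disjoint
simple paths from `s` to `t` of minimum total cost in `G`, then every path of
the residual network `G_S` ending at `t` has nonnegative cost w.r.t. `c_S`. -/
theorem residual_paths_to_target_nonneg [Fintype V]
    (E : Set (V × V)) (c : V × V → ℝ) (s : V)
    (hirr : ∀ e ∈ E, e.1 ≠ e.2)
    (hanti : ∀ e ∈ E, (e.2, e.1) ∉ E)
    (hc : ∀ e ∈ E, 0 ≤ c e)
    (t : V) (ht : t ≠ s)
    (k : ℕ) (S : Set (V × V)) (hSE : S ⊆ E)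
    (hS0 : k = 0 → S = ∅)
    (hSind : InducesSimple E c s t k S) :
    ∀ (u : V) (L : List (V × V)), IsPath (resEdges E S) u t L →
      0 ≤ pathCost (resCost c S) L := by
  classical
  obtain ⟨P, hPmin, _hsimp, hSeq⟩ := hSind
  intro u L hL
  by_contra hnegL
  push_neg at hnegL
  obtain ⟨hLnd, hLmem, hLch, hLhd, hLlast, hLnil⟩ := hL
  have hPpath := hPmin.1.1
  have hdisjP := hPmin.1.2
  -- the finset of edges of S
  set Sf : Finset (V × V) := Finset.univ.biUnion (fun j => (P j).toFinset) with hSfdef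
  have hmemSf : ∀ e, e ∈ Sf ↔ e ∈ S := by
    intro e
    simp only [hSfdef, Finset.mem_biUnion, Finset.mem_univ, true_and, List.mem_toFinset, hSeq]
    rfl
  have hbi : Set.PairwiseDisjoint (↑(Finset.univ : Finset (Fin k)))
      (fun j => (P j).toFinset) := by
    intro j _ j' _ h
    simp only [Function.onFun]
    rw [Finset.disjoint_left]
    intro e he he'
    exact hdisjP j j' h e (List.mem_toFinset.mp he) (List.mem_toFinset.mp he')
  have hcostSf : (∑ e ∈ Sf, c e) = famCost c P := by
    rw [hSfdef, Finset.sum_biUnion hbi]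
    refine Finset.sum_congr rfl fun j _ => ?_
    rw [List.sum_toFinset _ (hPpath j).1]
    rfl
  have hdivSf : ∀ v, (∑ e ∈ Sf, dvg v e) =
      (k : ℤ) * ((if s = v then 1 else 0) - (if t = v then 1 else 0)) := by
    intro v
    rw [hSfdef, Finset.sum_biUnion hbi]
    have : ∀ j : Fin k, (∑ e ∈ (P j).toFinset, dvg v e) =
        (if s = v then (1:ℤ) else 0) - (if t = v then 1 else 0) := by
      intro j
      obtain ⟨hnd, _, hch, hhd, hlst, hnil⟩ := hPpath j
      rw [List.sum_toFinset _ hnd]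
      exact chain_dvg v (P j) s t hch hhd hlst hnil
    rw [Finset.sum_congr rfl (fun j _ => this j)]
    simp [mul_comm]
    split_ifs <;> simp
  -- split the edges of L into forward and reversed edges
  set F : Finset (V × V) := L.toFinset.filter (fun e => (e.2, e.1) ∉ S) with hFdef
  set Rp : Finset (V × V) := L.toFinset.filter (fun e => (e.2, e.1) ∈ S) with hRpdef
  set R : Finset (V × V) := Rp.image (fun e => (e.2, e.1)) with hRdef
  have hFE : ∀ e ∈ F, e ∈ E ∧ e ∉ S := by
    intro e he
    obtain ⟨heL, hns⟩ := Finset.mem_filter.mp he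
    have hres := hLmem e (List.mem_toFinset.mp heL)
    rcases hres with h | h
    · exact ⟨h.1, h.2⟩
    · exact absurd h hns
  have hRS : ∀ e ∈ R, e ∈ S := by
    intro e he
    obtain ⟨f, hf, rfl⟩ := Finset.mem_image.mp he
    exact (Finset.mem_filter.mp hf).2
  have hRSf : R ⊆ Sf := fun e he => (hmemSf e).mpr (hRS e he)
  have hinj : ∀ a ∈ Rp, ∀ b ∈ Rp, (fun e : V × V => (e.2, e.1)) a =
      (fun e : V × V => (e.2, e.1)) b → a = b := by
    intro a _ b _ h
    simp only [Prod.mk.injEq] at h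
    exact Prod.ext h.2 h.1
  -- the modified edge set T
  set T : Finset (V × V) := (Sf \ R) ∪ F with hTdef
  have hdisjFS : Disjoint (Sf \ R) F := by
    rw [Finset.disjoint_right]
    intro e heF heSd
    exact (hFE e heF).2 ((hmemSf e).mp (Finset.mem_sdiff.mp heSd).1)
  have hRcost : (∑ e ∈ R, c e) = ∑ e ∈ Rp, c (e.2, e.1) := Finset.sum_image hinj
  have hsplitL : ∀ (g : V × V → ℝ), (∑ e ∈ Rp, g e) + (∑ e ∈ F, g e) = ∑ e ∈ L.toFinset, g e := by
    intro g
    rw [hRpdef, hFdef]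
    exact Finset.sum_filter_add_sum_filter_not _ _ _
  have hsplitLz : ∀ (g : V × V → ℤ), (∑ e ∈ Rp, g e) + (∑ e ∈ F, g e) = ∑ e ∈ L.toFinset, g e := by
    intro g
    rw [hRpdef, hFdef]
    exact Finset.sum_filter_add_sum_filter_not _ _ _
  have hpc : pathCost (resCost c S) L = (∑ e ∈ F, c e) - ∑ e ∈ Rp, c (e.2, e.1) := by
    rw [pathCost, ← List.sum_toFinset _ hLnd, ← hsplitL (resCost c S)]
    have h1 : (∑ e ∈ Rp, resCost c S e) = ∑ e ∈ Rp, -c (e.2, e.1) := by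
      refine Finset.sum_congr rfl fun e he => ?_
      exact if_pos (Finset.mem_filter.mp he).2
    have h2 : (∑ e ∈ F, resCost c S e) = ∑ e ∈ F, c e := by
      refine Finset.sum_congr rfl fun e he => ?_
      exact if_neg (Finset.mem_filter.mp he).2
    rw [h1, h2, Finset.sum_neg_distrib]
    ring
  have hcostT : (∑ e ∈ T, c e) = famCost c P + pathCost (resCost c S) L := by
    rw [hTdef, Finset.sum_union hdisjFS, Finset.sum_sdiff_eq_sub hRSf, hcostSf, hpc, hRcost]
    ring
  have hLdvg : ∀ v, (∑ e ∈ L.toFinset, dvg v e) =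
      (if u = v then (1:ℤ) else 0) - (if t = v then 1 else 0) := by
    intro v
    rw [List.sum_toFinset _ hLnd]
    exact chain_dvg v L u t hLch hLhd hLlast hLnil
  have hdivT : ∀ v, (∑ e ∈ T, dvg v e) =
      (k : ℤ) * ((if s = v then 1 else 0) - (if t = v then 1 else 0)) +
        ((if u = v then 1 else 0) - (if t = v then 1 else 0)) := by
    intro v
    have hRdvg : (∑ e ∈ R, dvg v e) = ∑ e ∈ Rp, dvg v (e.2, e.1) := Finset.sum_image hinj
    have hRdvg2 : (∑ e ∈ Rp, dvg v (e.2, e.1)) = -∑ e ∈ Rp, dvg v e := by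
      rw [← Finset.sum_neg_distrib]
      exact Finset.sum_congr rfl fun e _ => dvg_swap v e
    rw [hTdef, Finset.sum_union hdisjFS, Finset.sum_sdiff_eq_sub hRSf, hdivSf, hRdvg, hRdvg2,
      ← hLdvg v, ← hsplitLz (dvg v)]
    ring
  have hTE : ∀ e ∈ T, e ∈ E := by
    intro e he
    rcases Finset.mem_union.mp he with h | h
    · exact hSE ((hmemSf e).mp (Finset.mem_sdiff.mp h).1)
    · exact (hFE e h).1
  have hnegT : ∀ v, (∑ e ∈ T, dvg v e) < 0 → v = t := by
    intro v hv
    by_contra hvt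
    rw [hdivT v, if_neg (fun h : t = v => hvt h.symm)] at hv
    split_ifs at hv <;> omega
  have hsT : (k : ℤ) ≤ ∑ e ∈ T, dvg s e := by
    rw [hdivT s, if_pos rfl, if_neg ht]
    split_ifs <;> omega
  obtain ⟨Q, hQfam, _, hQcost⟩ := extract_family E c hc s t k T hTE hnegT hsT
  have hmin := hPmin.2 Q hQfam
  rw [hcostT] at hQcost
  linarith

end MultipathPreserver
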